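/- Let q be a prime power, m, n ≥ 1, let C_0 ∈ GL_m(𝔽_q) and C_1, …, C_{n−1} ∈ M_m(𝔽_q), and let Δ(X) ∈ 𝔽_q[X] be the determinant of the m × m matrix with polynomial entries I_m X^n − C_{n−1} X^{n−1} − ⋯ − C_1 X − C_0 (equivalently, Δ = det(f^{ij}) where f^{ij}(X) = δ^{ij} X^n − Σ_{ℓ=0}^{n−1} c_ℓ^{ij} X^ℓ and c_ℓ^{ij} is the (i,j)-entry of C_ℓ). Then the σ-LFSR with coefficients C_0, …, C_{n−1} is primitive (i.e., for every nonzero initial state in (𝔽_q^m)^n the generated sequence is periodic of period q^{mn} − 1) if and only if Δ(X) is a primitive polynomial of degree mn over 𝔽_q. -/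

import Mathlib

open Polynomial Matrix

/-- The order of a polynomial `f` over a finite field: the least positive
integer `e` such that `f` divides `X ^ e - 1`. -/
noncomputable def polyOrd {F : Type*} [Field F] (f : F[X]) : ℕ :=
  sInf {e : ℕ | 0 < e ∧ f ∣ X ^ e - 1}

/-- A monic polynomial `f` of degree `N` over `𝔽_q` is primitive if `f(0) ≠ 0`
and `ord f = q ^ N - 1`. -/
def IsPrimitivePoly {F : Type*} [Field F] [Fintype F] (f : F[X]) : Prop :=
  f.Monic ∧ f.eval 0 ≠ 0 ∧ polyOrd f = Fintype.card F ^ f.natDegree - 1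


namespace Stmt13Aux
variable {F : Type*} [Field F] {m n : ℕ}

noncomputable def Tmap (C : Fin n → Matrix (Fin m) (Fin m) F) :
    (Fin n → Fin m → F) →ₗ[F] (Fin n → Fin m → F) :=
  LinearMap.pi fun k => if h : (k : ℕ) + 1 < n then LinearMap.proj (⟨(k : ℕ) + 1, h⟩ : Fin n)
    else ∑ j : Fin n, (C j).vecMulLinear ∘ₗ LinearMap.proj j

lemma Tmap_apply (C : Fin n → Matrix (Fin m) (Fin m) F) (v : Fin n → Fin m → F) (k : Fin n) :
    Tmap C v k = if h : (k : ℕ) + 1 < n then v ⟨(k : ℕ) + 1, h⟩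
      else ∑ j : Fin n, v j ᵥ* C j := by
  rw [Tmap, LinearMap.pi_apply]
  split_ifs with h <;> simp

def sb (k : Fin n) (i : Fin m) : Fin n → Fin m → F :=
  Pi.single k (Pi.single i 1)

lemma TR0 (hn : 0 < n) (C : Fin n → Matrix (Fin m) (Fin m) F) (i : Fin m) :
    Tmap C (sb ⟨0, hn⟩ i) =
      ∑ j : Fin m, C ⟨0, hn⟩ i j • sb (⟨n - 1, by omega⟩ : Fin n) j := by
  funext k
  rw [Tmap_apply]
  split_ifs with h
  · have h1 : (⟨(k : ℕ) + 1, h⟩ : Fin n) ≠ ⟨0, hn⟩ := by simp [Fin.ext_iff]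
    have h2 : k ≠ (⟨n - 1, by omega⟩ : Fin n) := by
      have := k.isLt; simp only [ne_eq, Fin.ext_iff]; omega
    simp [sb, Pi.single_apply, h1, h2, Finset.sum_apply]
  · have hk : k = (⟨n - 1, by omega⟩ : Fin n) := by
      have := k.isLt; simp only [ne_eq, Fin.ext_iff]; omega
    funext j'
    simp only [sb, Finset.sum_apply, Pi.smul_apply, Pi.single_apply, hk,
      Matrix.vecMul, dotProduct, if_true, smul_eq_mul]
    rw [Finset.sum_eq_single (⟨0, hn⟩ : Fin n)]
    · simp [Pi.single_apply, ite_mul]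
    · intro b _ hb; simp [hb]
    · simp
end Stmt13Aux

namespace Stmt13Aux
variable {F : Type*} [Field F] {m n : ℕ}

lemma TR1 (C : Fin n → Matrix (Fin m) (Fin m) F) (k : ℕ) (hk1 : k + 1 < n) (i : Fin m) :
    Tmap C (sb ⟨k + 1, hk1⟩ i) = sb (⟨k, by omega⟩ : Fin n) i +
      ∑ j : Fin m, C ⟨k + 1, hk1⟩ i j • sb (⟨n - 1, by omega⟩ : Fin n) j := by
  funext k'
  rw [Tmap_apply]
  split_ifs with h
  · have h2 : k' ≠ (⟨n - 1, by omega⟩ : Fin n) := by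
      have := k'.isLt; simp only [ne_eq, Fin.ext_iff]; omega
    by_cases hkk : (k' : ℕ) = k
    · have e1 : (⟨(k' : ℕ) + 1, h⟩ : Fin n) = ⟨k + 1, hk1⟩ := by simp [Fin.ext_iff, hkk]
      have e2 : k' = (⟨k, by omega⟩ : Fin n) := by simp [Fin.ext_iff, hkk]
      have e4 : k ≠ n - 1 := by omega
      simp [sb, e1, e2, Pi.single_apply, h2, e4, Finset.sum_apply]
    · have e1 : (⟨(k' : ℕ) + 1, h⟩ : Fin n) ≠ ⟨k + 1, hk1⟩ := by
        simp only [ne_eq, Fin.ext_iff]; omega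
      have e2 : k' ≠ (⟨k, by omega⟩ : Fin n) := by simp only [ne_eq, Fin.ext_iff]; omega
      simp [sb, Pi.single_apply, e1, e2, h2, Finset.sum_apply]
  · have hk' : k' = (⟨n - 1, by omega⟩ : Fin n) := by
      have := k'.isLt; simp only [Fin.ext_iff]; omega
    have e2 : k' ≠ (⟨k, by omega⟩ : Fin n) := by
      have := k'.isLt; simp only [ne_eq, Fin.ext_iff]; omega
    funext j'
    simp only [sb, Finset.sum_apply, Pi.smul_apply, Pi.single_apply, hk', Pi.add_apply,
      Matrix.vecMul, dotProduct, if_true, smul_eq_mul]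
    rw [Finset.sum_eq_single (⟨k + 1, hk1⟩ : Fin n)]
    · have e3 : ¬((⟨n - 1, by omega⟩ : Fin n) = (⟨k, by omega⟩ : Fin n)) := by
        simp only [Fin.ext_iff]; omega
      simp [Pi.single_apply, ite_mul, e3]
    · intro b _ hb; simp [hb]
    · simp
end Stmt13Aux

namespace Stmt13Aux
variable {F : Type*} [Field F] {m n : ℕ}

lemma key (C : Fin n → Matrix (Fin m) (Fin m) F) :
    ∀ k, ∀ hk : k < n, ∀ i : Fin m,
      ((Tmap C) ^ (k + 1)) (sb ⟨k, hk⟩ i) =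
        ∑ ℓ : Fin n, if (ℓ : ℕ) ≤ k then
          ∑ j : Fin m, C ℓ i j • ((Tmap C) ^ (ℓ : ℕ)) (sb (⟨n - 1, by omega⟩ : Fin n) j)
        else 0 := by
  intro k
  induction k with
  | zero =>
    intro hk i
    rw [pow_one, TR0 hk]
    rw [Finset.sum_eq_single (⟨0, hk⟩ : Fin n)]
    · simp
    · intro b _ hb
      have : ¬((b : ℕ) ≤ 0) := by
        simp only [ne_eq, Fin.ext_iff] at hb; omega
      simp [this]
    · simp
  | succ k IH =>
    intro hk1 i
    have hT : ((Tmap C) ^ (k + 1 + 1)) (sb ⟨k + 1, hk1⟩ i) =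
        ((Tmap C) ^ (k + 1)) (Tmap C (sb ⟨k + 1, hk1⟩ i)) := by
      rw [pow_succ, Module.End.mul_apply]
    rw [hT, TR1 C k hk1 i, map_add, map_sum, IH (by omega) i]
    have split : ∀ ℓ : Fin n,
        (if (ℓ : ℕ) ≤ k + 1 then
          ∑ j : Fin m, C ℓ i j • ((Tmap C) ^ (ℓ : ℕ)) (sb (⟨n - 1, by omega⟩ : Fin n) j)
        else 0) =
        (if (ℓ : ℕ) ≤ k then
          ∑ j : Fin m, C ℓ i j • ((Tmap C) ^ (ℓ : ℕ)) (sb (⟨n - 1, by omega⟩ : Fin n) j)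
        else 0) +
        (if ℓ = ⟨k + 1, hk1⟩ then
          ∑ j : Fin m, C ℓ i j • ((Tmap C) ^ (ℓ : ℕ)) (sb (⟨n - 1, by omega⟩ : Fin n) j)
        else 0) := by
      intro ℓ
      by_cases h1 : (ℓ : ℕ) ≤ k
      · have h2 : (ℓ : ℕ) ≤ k + 1 := by omega
        have h3 : ℓ ≠ ⟨k + 1, hk1⟩ := by simp only [ne_eq, Fin.ext_iff]; omega
        simp [h1, h2, h3]
      · by_cases h4 : ℓ = ⟨k + 1, hk1⟩
        · have h2 : (ℓ : ℕ) ≤ k + 1 := by simp [h4]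
          simp [h1, h2, h4]
        · have h2 : ¬((ℓ : ℕ) ≤ k + 1) := by
            simp only [ne_eq, Fin.ext_iff] at h4
            have := ℓ.isLt; omega
          simp [h1, h2, h4]
    rw [Finset.sum_congr rfl fun ℓ _ => split ℓ, Finset.sum_add_distrib,
      Finset.sum_ite_eq' Finset.univ (⟨k + 1, hk1⟩ : Fin n)]
    simp [_root_.map_smul]
end Stmt13Aux

namespace Stmt13Aux
variable {F : Type*} [Field F] {m n : ℕ}

noncomputable def Mmat (C : Fin n → Matrix (Fin m) (Fin m) F) : Matrix (Fin m) (Fin m) F[X] :=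
  (X : F[X]) ^ n • (1 : Matrix (Fin m) (Fin m) F[X]) -
    ∑ ℓ : Fin n, (X : F[X]) ^ (ℓ : ℕ) • (C ℓ).map Polynomial.C

lemma Mmat_apply (C : Fin n → Matrix (Fin m) (Fin m) F) (i j : Fin m) :
    Mmat C i j = (if i = j then (X : F[X]) ^ n else 0) -
      ∑ ℓ : Fin n, Polynomial.C (C ℓ i j) * (X : F[X]) ^ (ℓ : ℕ) := by
  simp only [Mmat, Matrix.sub_apply, Matrix.smul_apply, Matrix.sum_apply, Matrix.one_apply,
    Matrix.map_apply, smul_eq_mul, mul_ite, mul_one, mul_zero]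
  congr 1
  exact Finset.sum_congr rfl fun ℓ _ => by ring

lemma aeval_Mmat_apply (C : Fin n → Matrix (Fin m) (Fin m) F) (i j : Fin m)
    (v : Fin n → Fin m → F) :
    (Polynomial.aeval (Tmap C) (Mmat C i j)) v =
      (if i = j then ((Tmap C) ^ n) v else 0) -
        ∑ ℓ : Fin n, C ℓ i j • ((Tmap C) ^ (ℓ : ℕ)) v := by
  rw [Mmat_apply]
  simp only [map_sub, map_sum, _root_.map_mul, aeval_C, aeval_X_pow, apply_ite (aeval (Tmap C)),
    map_pow, aeval_X, map_zero]
  simp [LinearMap.sub_apply, LinearMap.sum_apply, Module.End.mul_apply,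
    Module.algebraMap_end_apply, apply_ite (fun (f : Module.End F (Fin n → Fin m → F)) => f v)]
end Stmt13Aux

namespace Stmt13Aux
variable {F : Type*} [Field F] {m n : ℕ}

lemma keyn (hn : 0 < n) (C : Fin n → Matrix (Fin m) (Fin m) F) (i : Fin m) :
    ((Tmap C) ^ n) (sb (⟨n - 1, by omega⟩ : Fin n) i) =
      ∑ ℓ : Fin n, ∑ j : Fin m,
        C ℓ i j • ((Tmap C) ^ (ℓ : ℕ)) (sb (⟨n - 1, by omega⟩ : Fin n) j) := by
  have h := key C (n - 1) (by omega) i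
  rw [Nat.sub_add_cancel hn] at h
  rw [h]
  exact Finset.sum_congr rfl fun ℓ _ => by
    have : (ℓ : ℕ) ≤ n - 1 := by have := ℓ.isLt; omega
    simp [this]

lemma row_rel (hn : 0 < n) (C : Fin n → Matrix (Fin m) (Fin m) F) (i : Fin m) :
    ∑ j : Fin m, (Polynomial.aeval (Tmap C) (Mmat C i j))
      (sb (⟨n - 1, by omega⟩ : Fin n) j) = 0 := by
  simp only [aeval_Mmat_apply]
  rw [Finset.sum_sub_distrib, sub_eq_zero]
  rw [Finset.sum_ite_eq Finset.univ i
    (fun j => ((Tmap C) ^ n) (sb (⟨n - 1, by omega⟩ : Fin n) j))]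
  simp only [Finset.mem_univ, if_true]
  rw [keyn hn C i, Finset.sum_comm]
end Stmt13Aux

namespace Stmt13Aux
variable {F : Type*} [Field F] {m n : ℕ}

lemma aeval_comm_T (C : Fin n → Matrix (Fin m) (Fin m) F) (p : F[X])
    (v : Fin n → Fin m → F) :
    (Polynomial.aeval (Tmap C) p) (Tmap C v) = Tmap C ((Polynomial.aeval (Tmap C) p) v) := by
  have h : (Polynomial.aeval (Tmap C) p) * Tmap C = Tmap C * (Polynomial.aeval (Tmap C) p) := by
    have h2 : (Polynomial.aeval (Tmap C) p) * (Polynomial.aeval (Tmap C) (X : F[X]))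
        = (Polynomial.aeval (Tmap C) (X : F[X])) * (Polynomial.aeval (Tmap C) p) := by
      rw [← _root_.map_mul, ← _root_.map_mul, mul_comm]
    rwa [aeval_X] at h2
  calc (Polynomial.aeval (Tmap C) p) (Tmap C v)
      = ((Polynomial.aeval (Tmap C) p) * Tmap C) v := rfl
    _ = (Tmap C * (Polynomial.aeval (Tmap C) p)) v := by rw [h]
    _ = Tmap C ((Polynomial.aeval (Tmap C) p) v) := rfl

lemma Dw (hn : 0 < n) (C : Fin n → Matrix (Fin m) (Fin m) F) (i : Fin m) :
    (Polynomial.aeval (Tmap C) (Matrix.det (Mmat C)))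
      (sb (⟨n - 1, by omega⟩ : Fin n) i) = 0 := by
  classical
  have key2 : ∀ j, (Polynomial.aeval (Tmap C)
        ((Matrix.det (Mmat C) • (1 : Matrix (Fin m) (Fin m) F[X])) i j))
        (sb (⟨n - 1, by omega⟩ : Fin n) j)
      = if i = j then (Polynomial.aeval (Tmap C) (Matrix.det (Mmat C)))
          (sb (⟨n - 1, by omega⟩ : Fin n) j) else 0 := by
    intro j
    by_cases hij : i = j
    · simp [Matrix.smul_apply, Matrix.one_apply, hij, smul_eq_mul]
    · simp [Matrix.smul_apply, Matrix.one_apply, hij]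
  have h3 : ∀ j, (Polynomial.aeval (Tmap C)
        ((Matrix.det (Mmat C) • (1 : Matrix (Fin m) (Fin m) F[X])) i j))
        (sb (⟨n - 1, by omega⟩ : Fin n) j)
      = ∑ k, (Polynomial.aeval (Tmap C) (adjugate (Mmat C) i k))
          ((Polynomial.aeval (Tmap C) (Mmat C k j)) (sb (⟨n - 1, by omega⟩ : Fin n) j)) := by
    intro j
    rw [show (Matrix.det (Mmat C) • (1 : Matrix (Fin m) (Fin m) F[X])) i j
        = ∑ k, adjugate (Mmat C) i k * Mmat C k j by
      rw [← Matrix.adjugate_mul (Mmat C), Matrix.mul_apply]]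
    rw [map_sum, LinearMap.sum_apply]
    exact Finset.sum_congr rfl fun k _ => by rw [_root_.map_mul]; rfl
  have h4 : ∀ k, (∑ j, (Polynomial.aeval (Tmap C) (adjugate (Mmat C) i k))
      ((Polynomial.aeval (Tmap C) (Mmat C k j)) (sb (⟨n - 1, by omega⟩ : Fin n) j))) = 0 := by
    intro k
    rw [← map_sum (Polynomial.aeval (Tmap C) (adjugate (Mmat C) i k))
      (fun j => (Polynomial.aeval (Tmap C) (Mmat C k j)) (sb (⟨n - 1, by omega⟩ : Fin n) j))
      Finset.univ]
    have hr := row_rel hn C k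
    rw [hr, map_zero]
  calc (Polynomial.aeval (Tmap C) (Matrix.det (Mmat C))) (sb (⟨n - 1, by omega⟩ : Fin n) i)
      = ∑ j, (if i = j then (Polynomial.aeval (Tmap C) (Matrix.det (Mmat C)))
          (sb (⟨n - 1, by omega⟩ : Fin n) j) else 0) := by
        rw [Finset.sum_ite_eq Finset.univ i]; simp
    _ = ∑ j, (Polynomial.aeval (Tmap C)
          ((Matrix.det (Mmat C) • (1 : Matrix (Fin m) (Fin m) F[X])) i j))
          (sb (⟨n - 1, by omega⟩ : Fin n) j) :=
        Finset.sum_congr rfl fun j _ => (key2 j).symm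
    _ = ∑ j, ∑ k, (Polynomial.aeval (Tmap C) (adjugate (Mmat C) i k))
          ((Polynomial.aeval (Tmap C) (Mmat C k j)) (sb (⟨n - 1, by omega⟩ : Fin n) j)) :=
        Finset.sum_congr rfl fun j _ => h3 j
    _ = ∑ k, ∑ j, (Polynomial.aeval (Tmap C) (adjugate (Mmat C) i k))
          ((Polynomial.aeval (Tmap C) (Mmat C k j)) (sb (⟨n - 1, by omega⟩ : Fin n) j)) :=
        Finset.sum_comm
    _ = 0 := Finset.sum_eq_zero fun k _ => h4 k

lemma Dsb (hn : 0 < n) (C : Fin n → Matrix (Fin m) (Fin m) F) :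
    ∀ d k, k + d = n - 1 → ∀ (hk : k < n) (i : Fin m),
      (Polynomial.aeval (Tmap C) (Matrix.det (Mmat C))) (sb (⟨k, hk⟩ : Fin n) i) = 0 := by
  intro d
  induction d with
  | zero =>
    intro k hkd hk i
    have : (⟨k, hk⟩ : Fin n) = ⟨n - 1, by omega⟩ := by simp only [Fin.mk.injEq]; omega
    rw [this]
    exact Dw hn C i
  | succ d IH =>
    intro k hkd hk i
    have hk1 : k + 1 < n := by omega
    have hsb : sb (⟨k, hk⟩ : Fin n) i = Tmap C (sb ⟨k + 1, hk1⟩ i) -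
        ∑ j : Fin m, C ⟨k + 1, hk1⟩ i j • sb (⟨n - 1, by omega⟩ : Fin n) j := by
      rw [TR1 C k hk1 i]; abel
    rw [hsb, map_sub, map_sum, aeval_comm_T, IH (k + 1) (by omega) hk1 i, map_zero,
      Finset.sum_eq_zero (fun j _ => by
        rw [LinearMap.map_smul]
        rw [Dw hn C j, smul_zero]), sub_zero]

lemma vdecomp (v : Fin n → Fin m → F) :
    v = ∑ k : Fin n, ∑ i : Fin m, v k i • sb k i := by
  funext k' i'
  simp only [Finset.sum_apply, Pi.smul_apply, sb, Pi.single_apply, smul_eq_mul]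
  rw [Finset.sum_congr rfl (fun k _ => by
    rw [Finset.sum_congr rfl (fun i (_ : i ∈ Finset.univ) => by
      rw [apply_ite (fun f : Fin m → F => f i'), Pi.zero_apply, mul_ite, mul_zero] )])]
  simp [Pi.single_apply, Finset.sum_ite_eq]

lemma Dzero (hn : 0 < n) (C : Fin n → Matrix (Fin m) (Fin m) F) :
    Polynomial.aeval (Tmap C) (Matrix.det (Mmat C)) = 0 := by
  apply LinearMap.ext
  intro v
  rw [LinearMap.zero_apply]
  conv_lhs => rw [vdecomp v]
  rw [map_sum]
  refine Finset.sum_eq_zero fun k _ => ?_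
  rw [map_sum]
  refine Finset.sum_eq_zero fun i _ => ?_
  rw [LinearMap.map_smul]
  have hd := Dsb hn C (n - 1 - (k : ℕ)) (k : ℕ) (by have := k.isLt; omega) k.isLt i
  rw [show sb k i = sb (⟨(k : ℕ), k.isLt⟩ : Fin n) i from rfl, hd, smul_zero]
end Stmt13Aux

namespace Stmt13Aux
variable {F : Type*} [Field F] {m n : ℕ}

lemma Q_degree_lt (hn : 0 < n) (C : Fin n → Matrix (Fin m) (Fin m) F) (i j : Fin m) :
    (∑ ℓ : Fin n, Polynomial.C (C ℓ i j) * (X : F[X]) ^ (ℓ : ℕ)).degree < (n : ℕ) := by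
  apply lt_of_le_of_lt (Polynomial.degree_sum_le _ _)
  rw [Finset.sup_lt_iff (by exact_mod_cast WithBot.bot_lt_coe n)]
  intro ℓ _
  apply lt_of_le_of_lt (Polynomial.degree_mul_le _ _)
  calc (Polynomial.C (C ℓ i j)).degree + ((X : F[X]) ^ (ℓ : ℕ)).degree
      ≤ 0 + ((ℓ : ℕ) : WithBot ℕ) := by
        apply add_le_add Polynomial.degree_C_le
        rw [Polynomial.degree_X_pow]
    _ = ((ℓ : ℕ) : WithBot ℕ) := by rw [zero_add]
    _ < (n : ℕ) := by exact_mod_cast ℓ.isLt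

lemma Mmat_diag (hn : 0 < n) (C : Fin n → Matrix (Fin m) (Fin m) F) (i : Fin m) :
    (Mmat C i i).Monic ∧ (Mmat C i i).degree = (n : ℕ) := by
  rw [Mmat_apply, if_pos rfl]
  constructor
  · exact Polynomial.monic_X_pow_sub (by exact_mod_cast Q_degree_lt hn C i i)
  · rw [sub_eq_add_neg, Polynomial.degree_add_eq_left_of_degree_lt, Polynomial.degree_X_pow]
    rw [Polynomial.degree_neg, Polynomial.degree_X_pow]
    exact Q_degree_lt hn C i i

lemma Mmat_offdiag (hn : 0 < n) (C : Fin n → Matrix (Fin m) (Fin m) F) {i j : Fin m}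
    (hij : i ≠ j) : (Mmat C i j).degree < (n : ℕ) := by
  rw [Mmat_apply, if_neg hij, zero_sub, Polynomial.degree_neg]
  exact Q_degree_lt hn C i j

lemma Mmat_natDegree_le (hn : 0 < n) (C : Fin n → Matrix (Fin m) (Fin m) F) (i j : Fin m) :
    (Mmat C i j).natDegree ≤ n := by
  by_cases hij : i = j
  · subst hij
    exact le_of_eq (Polynomial.natDegree_eq_of_degree_eq_some (Mmat_diag hn C i).2)
  · by_cases h0 : Mmat C i j = 0
    · simp [h0]
    · have := (Polynomial.natDegree_lt_iff_degree_lt h0).2 (Mmat_offdiag hn C hij)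
      omega

lemma Mmat_natDegree_offdiag (hn : 0 < n) (C : Fin n → Matrix (Fin m) (Fin m) F) {i j : Fin m}
    (hij : i ≠ j) : (Mmat C i j).natDegree ≤ n - 1 := by
  by_cases h0 : Mmat C i j = 0
  · simp [h0]
  · have := (Polynomial.natDegree_lt_iff_degree_lt h0).2 (Mmat_offdiag hn C hij)
    omega

lemma det_Mmat (hm : 0 < m) (hn : 0 < n) (C : Fin n → Matrix (Fin m) (Fin m) F) :
    (Matrix.det (Mmat C)).Monic ∧ (Matrix.det (Mmat C)).natDegree = m * n := by
  classical
  have hb : (m - 1) * n + n = m * n := by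
    calc (m - 1) * n + n = ((m - 1) + 1) * n := by ring
      _ = m * n := by congr 1; omega
  have hmn1 : 1 ≤ m * n := Nat.one_le_iff_ne_zero.mpr (by positivity)
  have hPmonic : (∏ i : Fin m, Mmat C i i).Monic :=
    monic_prod_of_monic _ _ fun i _ => (Mmat_diag hn C i).1
  have hPdeg : (∏ i : Fin m, Mmat C i i).degree = ((m * n : ℕ) : WithBot ℕ) := by
    rw [Polynomial.degree_prod]
    rw [Finset.sum_congr rfl fun i _ => (Mmat_diag hn C i).2]
    rw [Finset.sum_const, Finset.card_univ, Fintype.card_fin]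
    simp [nsmul_eq_mul]
  -- bound on each non-identity term
  have hterm : ∀ σ : Equiv.Perm (Fin m), σ ≠ 1 →
      (Equiv.Perm.sign σ • ∏ i : Fin m, Mmat C (σ i) i).degree < ((m * n : ℕ) : WithBot ℕ) := by
    intro σ hσ
    obtain ⟨i₀, hi₀⟩ : ∃ i₀, σ i₀ ≠ i₀ := by
      by_contra hc
      push_neg at hc
      exact hσ (Equiv.ext hc)
    have hnd : (∏ i : Fin m, Mmat C (σ i) i).natDegree ≤ m * n - 1 := by
      apply le_trans (Polynomial.natDegree_prod_le _ _)
      have hsplit : ∑ i : Fin m, (Mmat C (σ i) i).natDegree =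
          (Mmat C (σ i₀) i₀).natDegree +
            ∑ i ∈ Finset.univ.erase i₀, (Mmat C (σ i) i).natDegree :=
        (Finset.add_sum_erase _ _ (Finset.mem_univ i₀)).symm
      rw [hsplit]
      have h1 : (Mmat C (σ i₀) i₀).natDegree ≤ n - 1 := Mmat_natDegree_offdiag hn C hi₀
      have h2 : ∑ i ∈ Finset.univ.erase i₀, (Mmat C (σ i) i).natDegree ≤ (m - 1) * n := by
        apply le_trans (Finset.sum_le_sum fun i _ => Mmat_natDegree_le hn C (σ i) i)
        rw [Finset.sum_const, Finset.card_erase_of_mem (Finset.mem_univ i₀),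
          Finset.card_univ, Fintype.card_fin, smul_eq_mul]
      omega
    have hd : (∏ i : Fin m, Mmat C (σ i) i).degree < ((m * n : ℕ) : WithBot ℕ) := by
      apply lt_of_le_of_lt (Polynomial.degree_le_natDegree)
      exact_mod_cast lt_of_le_of_lt hnd (by omega)
    rcases Int.units_eq_one_or (Equiv.Perm.sign σ) with hs | hs
    · rw [hs, one_smul]; exact hd
    · rw [hs, Units.smul_def, Units.val_neg, Units.val_one, neg_one_zsmul,
        Polynomial.degree_neg]
      exact hd
  have hdec : Matrix.det (Mmat C) = (∏ i : Fin m, Mmat C i i) +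
      ∑ σ ∈ Finset.univ.erase (1 : Equiv.Perm (Fin m)),
        Equiv.Perm.sign σ • ∏ i : Fin m, Mmat C (σ i) i := by
    rw [Matrix.det_apply, ← Finset.add_sum_erase _ _ (Finset.mem_univ (1 : Equiv.Perm (Fin m)))]
    congr 1
    simp
  have hrest : (∑ σ ∈ Finset.univ.erase (1 : Equiv.Perm (Fin m)),
      Equiv.Perm.sign σ • ∏ i : Fin m, Mmat C (σ i) i).degree <
      (∏ i : Fin m, Mmat C i i).degree := by
    rw [hPdeg]
    apply lt_of_le_of_lt (Polynomial.degree_sum_le _ _)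
    rw [Finset.sup_lt_iff (by exact_mod_cast WithBot.bot_lt_coe (m * n))]
    intro σ hσ
    exact hterm σ (Finset.ne_of_mem_erase hσ)
  constructor
  · rw [hdec]
    exact hPmonic.add_of_left hrest
  · rw [hdec]
    apply Polynomial.natDegree_eq_of_degree_eq_some
    rw [Polynomial.degree_add_eq_left_of_degree_lt hrest, hPdeg]
end Stmt13Aux

namespace Stmt13Aux
variable {F : Type*} [Field F] {m n : ℕ}

lemma Tpow_index (hn : 0 < n) (C : Fin n → Matrix (Fin m) (Fin m) F)
    (v : Fin n → Fin m → F) :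
    ∀ a, ∀ ha : a < n, ∀ t, ((Tmap C) ^ t) v ⟨a, ha⟩ = ((Tmap C) ^ (t + a)) v ⟨0, hn⟩ := by
  intro a
  induction a with
  | zero => intro ha t; rfl
  | succ a IH =>
    intro ha t
    have h1 : ((Tmap C) ^ (t + 1)) v = Tmap C (((Tmap C) ^ t) v) := by
      rw [pow_succ', Module.End.mul_apply]
    have h2 : Tmap C (((Tmap C) ^ t) v) ⟨a, by omega⟩ = ((Tmap C) ^ t) v ⟨a + 1, ha⟩ := by
      rw [Tmap_apply]
      rw [dif_pos (show a + 1 < n from ha)]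
    rw [← h2, ← h1, IH (by omega) (t + 1)]
    show ((Tmap C) ^ (t + 1 + a)) v ⟨0, hn⟩ = ((Tmap C) ^ (t + (a + 1))) v ⟨0, hn⟩
    rw [show t + 1 + a = t + (a + 1) by omega]

lemma seq_window (hn : 0 < n) (C : Fin n → Matrix (Fin m) (Fin m) F) (s : ℕ → Fin m → F)
    (hs : ∀ i : ℕ, s (i + n) = ∑ j : Fin n, s (i + (j : ℕ)) ᵥ* C j) :
    ∀ t, ∀ k : Fin n, ((Tmap C) ^ t) (fun k' : Fin n => s (k' : ℕ)) k = s (t + (k : ℕ)) := by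
  intro t
  induction t with
  | zero => intro k; rw [pow_zero]; simp
  | succ t IH =>
    intro k
    have h1 : ((Tmap C) ^ (t + 1)) (fun k' : Fin n => s (k' : ℕ)) =
        Tmap C (((Tmap C) ^ t) (fun k' : Fin n => s (k' : ℕ))) := by
      rw [pow_succ', Module.End.mul_apply]
    rw [h1, Tmap_apply]
    split_ifs with h
    · rw [IH ⟨(k : ℕ) + 1, h⟩]
      show s (t + ((k : ℕ) + 1)) = s (t + 1 + (k : ℕ))
      exact congrArg s (by omega)
    · have hk : (k : ℕ) = n - 1 := by have := k.isLt; omega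
      rw [Finset.sum_congr rfl fun j (_ : j ∈ Finset.univ) => by rw [IH j]]
      rw [← hs t]
      exact congrArg s (by omega)

lemma lhs_iff_pstar (hm : 0 < m) (hn : 0 < n) (C : Fin n → Matrix (Fin m) (Fin m) F) (c : ℕ) :
    (∀ s : ℕ → Fin m → F,
        (∀ i : ℕ, s (i + n) = ∑ j : Fin n, s (i + (j : ℕ)) ᵥ* C j) →
        (∃ j : Fin n, s (j : ℕ) ≠ 0) →
        IsLeast {r : ℕ | 0 < r ∧ ∀ j : ℕ, s (j + r) = s j} c) ↔
    (∀ v : Fin n → Fin m → F, v ≠ 0 →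
        IsLeast {r : ℕ | 0 < r ∧ ((Tmap C) ^ r) v = v} c) := by
  constructor
  · intro h v hv
    set s : ℕ → Fin m → F := fun t => ((Tmap C) ^ t) v ⟨0, hn⟩ with hsdef
    have hw : ∀ t, ∀ k : Fin n, ((Tmap C) ^ t) v k = s (t + (k : ℕ)) := by
      intro t k
      have := Tpow_index hn C v (k : ℕ) k.isLt t
      rw [hsdef]
      exact this
    have hw0 : ∀ k : Fin n, v k = s (k : ℕ) := by
      intro k
      have := hw 0 k
      rw [pow_zero] at this
      simpa using this
    have hrec : ∀ i : ℕ, s (i + n) = ∑ j : Fin n, s (i + (j : ℕ)) ᵥ* C j := by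
      intro i
      have h1 : s (i + n) = ((Tmap C) ^ (i + 1)) v ⟨n - 1, by omega⟩ := by
        rw [hw (i + 1) ⟨n - 1, by omega⟩]
        show s (i + n) = s (i + 1 + (n - 1))
        exact congrArg s (by omega)
      have h2 : ((Tmap C) ^ (i + 1)) v = Tmap C (((Tmap C) ^ i) v) := by
        rw [pow_succ', Module.End.mul_apply]
      rw [h1, h2, Tmap_apply, dif_neg (by simp; omega)]
      exact Finset.sum_congr rfl fun j _ => by rw [hw i j]
    have hnz : ∃ j : Fin n, s (j : ℕ) ≠ 0 := by
      obtain ⟨k, hk⟩ := Function.ne_iff.mp hv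
      exact ⟨k, by rw [← hw0 k]; simpa using hk⟩
    have hIs := h s hrec hnz
    have hsets : {r : ℕ | 0 < r ∧ ∀ t : ℕ, s (t + r) = s t} =
        {r : ℕ | 0 < r ∧ ((Tmap C) ^ r) v = v} := by
      ext r
      simp only [Set.mem_setOf_eq, and_congr_right_iff]
      intro _
      constructor
      · intro hper
        funext k
        rw [hw r k, show r + (k : ℕ) = (k : ℕ) + r by omega, hper (k : ℕ), ← hw0 k]
      · intro hfix t
        have : s (t + r) = ((Tmap C) ^ t) (((Tmap C) ^ r) v) ⟨0, hn⟩ := by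
          rw [← Module.End.mul_apply, ← pow_add]
        rw [this, hfix]
    rwa [hsets] at hIs
  · intro h s hrec hnz
    set v : Fin n → Fin m → F := fun k : Fin n => s (k : ℕ) with hvdef
    have hv : v ≠ 0 := by
      obtain ⟨j, hj⟩ := hnz
      exact Function.ne_iff.mpr ⟨j, by simpa [hvdef] using hj⟩
    have hw := seq_window hn C s hrec
    have hs0 : ∀ u : ℕ, s u = ((Tmap C) ^ u) v ⟨0, hn⟩ := by
      intro u
      have := hw u ⟨0, hn⟩
      simpa using this.symm
    have hIs := h v hv
    have hsets : {r : ℕ | 0 < r ∧ ((Tmap C) ^ r) v = v} =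
        {r : ℕ | 0 < r ∧ ∀ t : ℕ, s (t + r) = s t} := by
      ext r
      simp only [Set.mem_setOf_eq, and_congr_right_iff]
      intro _
      constructor
      · intro hfix t
        rw [hs0 (t + r), hs0 t, pow_add, Module.End.mul_apply, hfix]
      · intro hper
        funext k
        rw [hw r k, show r + (k : ℕ) = (k : ℕ) + r by omega, hper (k : ℕ)]
    rwa [hsets] at hIs
end Stmt13Aux

namespace Stmt13Aux
variable {F : Type*} [Field F] {m n : ℕ}

lemma cover_aux {A : Type*} [Fintype A] [DecidableEq A] {z : A} {N : ℕ}
    (hcard : Fintype.card A = N + 1) (G : Fin N → A) (hinj : Function.Injective G)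
    (hne : ∀ k, G k ≠ z) : ∀ y : A, y ≠ z → ∃ k, G k = y := by
  intro y hy
  have h1 : (Finset.univ.image G).card = N := by
    rw [Finset.card_image_of_injective _ hinj, Finset.card_univ, Fintype.card_fin]
  have h2 : Finset.univ.image G ⊆ Finset.univ.erase z := by
    intro a ha
    obtain ⟨k, _, rfl⟩ := Finset.mem_image.mp ha
    exact Finset.mem_erase.mpr ⟨hne k, Finset.mem_univ _⟩
  have h3 : (Finset.univ.erase z).card = N := by
    rw [Finset.card_erase_of_mem (Finset.mem_univ z), Finset.card_univ, hcard]
    omega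
  have h4 : Finset.univ.image G = Finset.univ.erase z :=
    Finset.eq_of_subset_of_card_le h2 (by omega)
  have h5 : y ∈ Finset.univ.image G := by
    rw [h4]; exact Finset.mem_erase.mpr ⟨hy, Finset.mem_univ _⟩
  obtain ⟨k, _, hk⟩ := Finset.mem_image.mp h5
  exact ⟨k, hk⟩

lemma prim_to_pstar [Fintype F] (hm : 0 < m) (hn : 0 < n)
    (C : Fin n → Matrix (Fin m) (Fin m) F) (Δ : F[X]) (hΔ : Δ = Matrix.det (Mmat C))
    (hmon : Δ.Monic) (hdeg : Δ.natDegree = m * n)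
    (hord : polyOrd Δ = Fintype.card F ^ (m * n) - 1) :
    ∀ v : Fin n → Fin m → F, v ≠ 0 →
      IsLeast {r : ℕ | 0 < r ∧ ((Tmap C) ^ r) v = v} (Fintype.card F ^ (m * n) - 1) := by
  classical
  set c : ℕ := Fintype.card F ^ (m * n) with hcdef
  have hq : 1 < Fintype.card F := Fintype.one_lt_card
  have hc : 2 ≤ c := by
    have : 1 < Fintype.card F ^ (m * n) := Nat.one_lt_pow (by positivity) hq
    omega
  have h1c : 0 < c - 1 := by omega
  -- the order set is inhabited by c - 1
  have hdvd1 : Δ ∣ (X : F[X]) ^ (c - 1) - 1 := by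
    have hne : {e : ℕ | 0 < e ∧ Δ ∣ (X : F[X]) ^ e - 1}.Nonempty := by
      by_contra hemp
      rw [Set.not_nonempty_iff_eq_empty] at hemp
      have : polyOrd Δ = 0 := by rw [polyOrd, hemp, Nat.sInf_empty]
      omega
    have hmem := Nat.sInf_mem hne
    rw [← polyOrd, hord] at hmem
    exact hmem.2
  obtain ⟨g1, hg1⟩ := hdvd1
  have hTc : (Tmap C) ^ (c - 1) = 1 := by
    have ha : Polynomial.aeval (Tmap C) ((X : F[X]) ^ (c - 1) - 1) = 0 := by
      rw [hg1, _root_.map_mul, hΔ, Dzero hn C, zero_mul]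
    rwa [map_sub, aeval_X_pow, _root_.map_one, sub_eq_zero] at ha
  -- the quotient ring
  have hΔne : Δ ≠ 0 := hmon.ne_zero
  set A := AdjoinRoot Δ with hAdef
  let hpb : PowerBasis F A := AdjoinRoot.powerBasis' hmon
  letI : Fintype A := Module.fintypeOfFintype hpb.basis
  have hcardA : Fintype.card A = c := by
    rw [Module.card_fintype hpb.basis, Fintype.card_fin, hcdef, ← hdeg]
    congr 1
  haveI hAnt : Nontrivial A := Fintype.one_lt_card_iff_nontrivial.mp (by omega)
  set x : A := AdjoinRoot.root Δ with hxdef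
  have hx : x ^ (c - 1) = 1 := by
    have h0 : AdjoinRoot.mk Δ ((X : F[X]) ^ (c - 1) - 1) = 0 :=
      AdjoinRoot.mk_eq_zero.mpr ⟨g1, hg1⟩
    rwa [map_sub, _root_.map_one, map_pow, AdjoinRoot.mk_X, sub_eq_zero] at h0
  have hxe : ∀ e : ℕ, 0 < e → e < c - 1 → x ^ e ≠ 1 := by
    intro e he1 he2 hcon
    have h0 : AdjoinRoot.mk Δ ((X : F[X]) ^ e - 1) = 0 := by
      rw [map_sub, _root_.map_one, map_pow, AdjoinRoot.mk_X, ← hxdef, hcon, sub_self]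
    have hdvd : Δ ∣ (X : F[X]) ^ e - 1 := AdjoinRoot.mk_eq_zero.mp h0
    have hle : polyOrd Δ ≤ e := Nat.sInf_le ⟨he1, hdvd⟩
    omega
  have hxk0 : ∀ k : ℕ, k ≤ c - 1 → x ^ k ≠ 0 := by
    intro k hk h0'
    have h1 : (1 : A) = 0 := by
      rw [← hx, show c - 1 = (c - 1 - k) + k by omega, pow_add, h0', mul_zero]
    exact one_ne_zero h1
  have haux : ∀ a b : ℕ, a < b → b < c - 1 → x ^ a ≠ x ^ b := by
    intro a b hab hb hcon
    have h1 : x ^ (a + (c - 1 - b)) = 1 := by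
      rw [pow_add, hcon, ← pow_add, show b + (c - 1 - b) = c - 1 by omega, hx]
    exact hxe (a + (c - 1 - b)) (by omega) (by omega) h1
  have hcover : ∀ y : A, y ≠ 0 → ∃ k : ℕ, k < c - 1 ∧ x ^ k = y := by
    have hinj : Function.Injective (fun k : Fin (c - 1) => x ^ (k : ℕ)) := by
      intro a b hab
      rcases lt_trichotomy (a : ℕ) (b : ℕ) with h | h | h
      · exact absurd hab (haux _ _ h b.isLt)
      · exact Fin.ext h
      · exact absurd hab.symm (haux _ _ h a.isLt)
    have := cover_aux (z := (0 : A)) (N := c - 1) (by omega)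
      (fun k : Fin (c - 1) => x ^ (k : ℕ)) hinj
      (fun k => hxk0 (k : ℕ) (by have := k.isLt; omega))
    intro y hy
    obtain ⟨k, hk⟩ := this y hy
    exact ⟨(k : ℕ), k.isLt, hk⟩
  have hunit : ∀ r : ℕ, 0 < r → r < c - 1 →
      ∃ g q : F[X], ((X : F[X]) ^ r - 1) * g = 1 + Δ * q := by
    intro r h1 h2
    have hy : x ^ r - 1 ≠ 0 := sub_ne_zero.mpr (hxe r h1 h2)
    obtain ⟨k, hk, hky⟩ := hcover (x ^ r - 1) hy
    have hinv : (x ^ r - 1) * x ^ (c - 1 - k) = 1 := by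
      rw [← hky, ← pow_add, show k + (c - 1 - k) = c - 1 by omega, hx]
    have hmk : AdjoinRoot.mk Δ (((X : F[X]) ^ r - 1) * (X : F[X]) ^ (c - 1 - k) - 1) = 0 := by
      rw [map_sub, _root_.map_one, _root_.map_mul, map_sub, _root_.map_one, map_pow, map_pow,
        AdjoinRoot.mk_X, ← hxdef, hinv, sub_self]
    obtain ⟨q, hq2⟩ := AdjoinRoot.mk_eq_zero.mp hmk
    exact ⟨(X : F[X]) ^ (c - 1 - k), q, by rw [← hq2]; ring⟩
  -- conclude
  intro v hv
  constructor
  · exact ⟨h1c, by rw [hTc]; rfl⟩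
  · rintro r ⟨hr0, hrfix⟩
    by_contra hlt
    push_neg at hlt
    obtain ⟨g, q, hgq⟩ := hunit r hr0 hlt
    have hL : (Polynomial.aeval (Tmap C) (((X : F[X]) ^ r - 1) * g)) v = 0 := by
      rw [mul_comm, _root_.map_mul, Module.End.mul_apply]
      have : (Polynomial.aeval (Tmap C) ((X : F[X]) ^ r - 1)) v = 0 := by
        rw [map_sub, aeval_X_pow, _root_.map_one, LinearMap.sub_apply, Module.End.one_apply,
          hrfix, sub_self]
      rw [this, map_zero]
    have hR : (Polynomial.aeval (Tmap C) ((1 : F[X]) + Δ * q)) v = v := by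
      rw [map_add, _root_.map_one, LinearMap.add_apply, Module.End.one_apply, mul_comm,
        _root_.map_mul, Module.End.mul_apply, hΔ, Dzero hn C, LinearMap.zero_apply,
        map_zero, add_zero]
    rw [hgq, hR] at hL
    exact hv hL
end Stmt13Aux

namespace Stmt13Aux
variable {F : Type*} [Field F] {m n : ℕ}

lemma pstar_to_prim [Fintype F] (hm : 0 < m) (hn : 0 < n)
    (C : Fin n → Matrix (Fin m) (Fin m) F) (Δ : F[X]) (hΔ : Δ = Matrix.det (Mmat C))
    (hp : ∀ v : Fin n → Fin m → F, v ≠ 0 →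
      IsLeast {r : ℕ | 0 < r ∧ ((Tmap C) ^ r) v = v} (Fintype.card F ^ (m * n) - 1)) :
    IsPrimitivePoly Δ ∧ Δ.natDegree = m * n := by
  classical
  obtain ⟨hmon, hdeg⟩ : Δ.Monic ∧ Δ.natDegree = m * n := by
    rw [hΔ]; exact det_Mmat hm hn C
  set c : ℕ := Fintype.card F ^ (m * n) with hcdef
  have hq : 1 < Fintype.card F := Fintype.one_lt_card
  have hc : 2 ≤ c := by
    have : 1 < Fintype.card F ^ (m * n) := Nat.one_lt_pow (by positivity) hq
    omega
  have h1c : 0 < c - 1 := by omega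
  have hcardV : Fintype.card (Fin n → Fin m → F) = c := by
    rw [hcdef]
    rw [Fintype.card_fun, Fintype.card_fun, Fintype.card_fin, Fintype.card_fin, ← pow_mul,
      mul_comm]
  -- the distinguished nonzero vector
  set v₀ : Fin n → Fin m → F := sb (⟨n - 1, by omega⟩ : Fin n) ⟨0, hm⟩ with hv₀def
  have hv₀ : v₀ ≠ 0 := by
    intro hz
    have h1 : v₀ (⟨n - 1, by omega⟩ : Fin n) (⟨0, hm⟩ : Fin m) = 1 := by
      rw [hv₀def]
      show sb _ _ _ _ = 1
      rw [sb, Pi.single_eq_same, Pi.single_eq_same]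
    rw [hz] at h1
    simp at h1
  have hL := hp v₀ hv₀
  have hfix0 : ((Tmap C) ^ (c - 1)) v₀ = v₀ := hL.1.2
  have hT1 : (Tmap C) ^ (c - 1) = 1 := by
    apply LinearMap.ext
    intro u
    by_cases hu : u = 0
    · simp [hu]
    · rw [Module.End.one_apply]
      exact (hp u hu).1.2
  -- orbit injectivity
  have haux : ∀ a b : ℕ, a < b → b < c - 1 →
      ((Tmap C) ^ a) v₀ ≠ ((Tmap C) ^ b) v₀ := by
    intro a b hab hb heq
    have h1 : ((Tmap C) ^ (c - 1 - b + a)) v₀ = v₀ := by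
      rw [pow_add, Module.End.mul_apply, heq, ← Module.End.mul_apply, ← pow_add,
        show c - 1 - b + b = c - 1 by omega, hfix0]
    have h2 : c - 1 ≤ c - 1 - b + a := hL.2 ⟨by omega, h1⟩
    omega
  have hGne0 : ∀ k : ℕ, k ≤ c - 1 → ((Tmap C) ^ k) v₀ ≠ 0 := by
    intro k hk h0'
    apply hv₀
    rw [← hfix0, show c - 1 = (c - 1 - k) + k by omega, pow_add, Module.End.mul_apply, h0',
      _root_.map_zero]
  have hcover : ∀ u : Fin n → Fin m → F, u ≠ 0 → ∃ k : ℕ, ((Tmap C) ^ k) v₀ = u := by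
    have hinj : Function.Injective (fun k : Fin (c - 1) => ((Tmap C) ^ (k : ℕ)) v₀) := by
      intro a b hab
      rcases lt_trichotomy (a : ℕ) (b : ℕ) with h | h | h
      · exact absurd hab (haux _ _ h b.isLt)
      · exact Fin.ext h
      · exact absurd hab.symm (haux _ _ h a.isLt)
    have hcc := cover_aux (z := (0 : Fin n → Fin m → F)) (N := c - 1) (by omega)
      (fun k : Fin (c - 1) => ((Tmap C) ^ (k : ℕ)) v₀) hinj
      (fun k => hGne0 (k : ℕ) (by have := k.isLt; omega))
    intro u hu
    obtain ⟨k, hk⟩ := hcc u hu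
    exact ⟨(k : ℕ), hk⟩
  -- minimal polynomial
  have hint : IsIntegral F (Tmap C) :=
    ⟨Δ, hmon, by rw [← Polynomial.aeval_def, hΔ]; exact Dzero hn C⟩
  set μ : F[X] := minpoly F (Tmap C) with hμdef
  have hμmon : μ.Monic := minpoly.monic hint
  have hμdvd : μ ∣ Δ := minpoly.dvd F _ (by rw [hΔ]; exact Dzero hn C)
  have hμle : μ.natDegree ≤ m * n := by
    have := Polynomial.natDegree_le_of_dvd hμdvd hmon.ne_zero
    omega
  -- spanning: deg μ ≥ m * n
  have hspan : Submodule.span F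
      (Set.range fun k : Fin μ.natDegree => ((Tmap C) ^ (k : ℕ)) v₀) = ⊤ := by
    rw [eq_top_iff]
    intro u _
    by_cases hu : u = 0
    · rw [hu]; exact Submodule.zero_mem _
    obtain ⟨k, hk⟩ := hcover u hu
    have hμ0 : Polynomial.aeval (Tmap C) μ = 0 := minpoly.aeval F (Tmap C)
    have hxk : ((Tmap C) ^ k) v₀ =
        (Polynomial.aeval (Tmap C) ((X : F[X]) ^ k %ₘ μ)) v₀ := by
      have hdiv := Polynomial.modByMonic_add_div ((X : F[X]) ^ k) μ
      calc ((Tmap C) ^ k) v₀ = (Polynomial.aeval (Tmap C) ((X : F[X]) ^ k)) v₀ := by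
            rw [aeval_X_pow]
        _ = (Polynomial.aeval (Tmap C) ((X : F[X]) ^ k %ₘ μ)) v₀ +
            (Polynomial.aeval (Tmap C) (μ * ((X : F[X]) ^ k /ₘ μ))) v₀ := by
            rw [← LinearMap.add_apply, ← map_add, hdiv]
        _ = (Polynomial.aeval (Tmap C) ((X : F[X]) ^ k %ₘ μ)) v₀ := by
            rw [_root_.map_mul, hμ0, zero_mul, LinearMap.zero_apply, add_zero]
    by_cases hr0 : (X : F[X]) ^ k %ₘ μ = 0
    · exact absurd (by rw [← hk, hxk, hr0, _root_.map_zero, LinearMap.zero_apply]) hu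
    have hrd : ((X : F[X]) ^ k %ₘ μ).natDegree < μ.natDegree :=
      Polynomial.natDegree_lt_natDegree hr0 (Polynomial.degree_modByMonic_lt _ hμmon)
    rw [← hk, hxk, Polynomial.aeval_eq_sum_range, LinearMap.sum_apply]
    apply Submodule.sum_mem
    intro i hi
    rw [Finset.mem_range] at hi
    rw [LinearMap.smul_apply]
    apply Submodule.smul_mem
    apply Submodule.subset_span
    exact ⟨⟨i, by omega⟩, rfl⟩
  have hge : m * n ≤ μ.natDegree := by
    have h2 := finrank_span_le_card (R := F)
      (Set.range fun k : Fin μ.natDegree => ((Tmap C) ^ (k : ℕ)) v₀)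
    rw [hspan, finrank_top] at h2
    have h3 : (Set.range fun k : Fin μ.natDegree =>
        ((Tmap C) ^ (k : ℕ)) v₀).toFinset.card ≤ μ.natDegree := by
      rw [Set.toFinset_range]
      exact Finset.card_image_le.trans (by simp)
    have h4 : Module.finrank F (Fin n → Fin m → F) = m * n := by
      rw [Module.finrank_pi_fintype]
      simp [Module.finrank_pi]
      rw [mul_comm]
    omega
  have hμdeg : μ.natDegree = m * n := le_antisymm hμle hge
  -- Δ = μ
  have hΔμ : Δ = μ := by
    obtain ⟨kq, hkq⟩ := hμdvd
    have hμne : μ ≠ 0 := minpoly.ne_zero hint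
    have hkne : kq ≠ 0 := by
      intro h
      exact hmon.ne_zero (by rw [hkq, h, mul_zero])
    have hknd : kq.natDegree = 0 := by
      have hnd := Polynomial.natDegree_mul hμne hkne
      rw [← hkq] at hnd
      omega
    have hklc : kq.leadingCoeff = 1 := by
      have h1 : Δ.leadingCoeff = μ.leadingCoeff * kq.leadingCoeff := by
        rw [hkq, Polynomial.leadingCoeff_mul]
      rw [hmon.leadingCoeff, hμmon.leadingCoeff, one_mul] at h1
      exact h1.symm
    have hc0 : kq.coeff 0 = 1 := by
      have h5 : kq.leadingCoeff = kq.coeff 0 := by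
        rw [Polynomial.leadingCoeff, hknd]
      rw [← h5, hklc]
    have hk1 : kq = 1 := by
      rw [Polynomial.eq_C_of_natDegree_eq_zero hknd, hc0, Polynomial.C_1]
    rw [hkq, hk1, mul_one]
  -- order of Δ
  have hdvdc : Δ ∣ (X : F[X]) ^ (c - 1) - 1 := by
    rw [hΔμ]
    apply minpoly.dvd
    rw [map_sub, aeval_X_pow, _root_.map_one, hT1, sub_self]
  have hordΔ : polyOrd Δ = c - 1 := by
    apply IsLeast.csInf_eq
    constructor
    · exact ⟨h1c, hdvdc⟩
    · rintro e ⟨he0, hedvd⟩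
      obtain ⟨ge, hge2⟩ := hedvd
      have hTe : (Tmap C) ^ e = 1 := by
        have ha : Polynomial.aeval (Tmap C) ((X : F[X]) ^ e - 1) = 0 := by
          rw [hge2, _root_.map_mul, hΔ, Dzero hn C, zero_mul]
        rwa [map_sub, aeval_X_pow, _root_.map_one, sub_eq_zero] at ha
      exact hL.2 ⟨he0, by rw [hTe, Module.End.one_apply]⟩
  have heval : Δ.eval 0 ≠ 0 := by
    obtain ⟨kk, hkk⟩ := hdvdc
    intro h0
    have := congrArg (Polynomial.eval (0 : F)) hkk
    rw [Polynomial.eval_sub, Polynomial.eval_pow, Polynomial.eval_X, Polynomial.eval_one,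
      Polynomial.eval_mul, h0, zero_mul, zero_pow (by omega : c - 1 ≠ 0), zero_sub] at this
    exact one_ne_zero (neg_eq_zero.mp this)
  refine ⟨⟨hmon, heval, ?_⟩, hdeg⟩
  rw [hdeg, hordΔ]
end Stmt13Aux

/-- A σ-LFSR of order `n` over `𝔽_{q^m}` with matrix coefficients
`C_0 ∈ GL_m(𝔽_q)`, `C_1, …, C_{n-1} ∈ M_m(𝔽_q)` is primitive (every nonzero initial
state generates a periodic sequence of least period `q^{mn} - 1`) iff
`Δ(X) = det (I_m X^n - C_{n-1} X^{n-1} - ⋯ - C_1 X - C_0)` is a primitive polynomial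
of degree `mn` over `𝔽_q`. -/
theorem stmt_13 {F : Type*} [Field F] [Fintype F] (m n : ℕ) (hm : 1 ≤ m) (hn : 1 ≤ n)
    (C : Fin n → Matrix (Fin m) (Fin m) F) (h0 : IsUnit (C ⟨0, hn⟩))
    (Δ : F[X])
    (hΔ : Δ = Matrix.det
      ((X : F[X]) ^ n • (1 : Matrix (Fin m) (Fin m) F[X]) -
        ∑ ℓ : Fin n, (X : F[X]) ^ (ℓ : ℕ) • (C ℓ).map Polynomial.C)) :
    (∀ s : ℕ → Fin m → F,
        (∀ i : ℕ, s (i + n) = ∑ j : Fin n, s (i + (j : ℕ)) ᵥ* C j) →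
        (∃ j : Fin n, s (j : ℕ) ≠ 0) →
        IsLeast {r : ℕ | 0 < r ∧ ∀ j : ℕ, s (j + r) = s j}
          (Fintype.card F ^ (m * n) - 1)) ↔
    (IsPrimitivePoly Δ ∧ Δ.natDegree = m * n) := by
  rw [Stmt13Aux.lhs_iff_pstar hm hn C]
  constructor
  · intro hp
    exact Stmt13Aux.pstar_to_prim hm hn C Δ (hΔ.trans rfl) hp
  · rintro ⟨⟨hmon, heval, hord⟩, hdeg⟩
    apply Stmt13Aux.prim_to_pstar hm hn C Δ (hΔ.trans rfl) hmon hdeg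
    rw [← hdeg]
    exact hord
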